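/- For the OneJumpZeroJump problem with parameters n and k (2 ≤ k ≤ n/4), a solution x ∈ {0,1}^n is Pareto optimal if and only if |x|₁ ∈ [k, n−k] ∪ {0, n}. -/

import Mathlib

def ones {n : ℕ} (x : Fin n → Bool) : ℕ := (Finset.univ.filter fun i => x i = true).card

def zeros {n : ℕ} (x : Fin n → Bool) : ℕ := (Finset.univ.filter fun i => x i = false).card

/-- First objective of OneJumpZeroJump_{n,k}. -/
def ojzjF1 (n k : ℕ) (x : Fin n → Bool) : ℤ :=
  if ones x ≤ n - k ∨ x = (fun _ => true) then (k : ℤ) + ones x else (n : ℤ) - ones x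

/-- Second objective of OneJumpZeroJump_{n,k}. -/
def ojzjF2 (n k : ℕ) (x : Fin n → Bool) : ℤ :=
  if zeros x ≤ n - k ∨ x = (fun _ => false) then (k : ℤ) + zeros x else (n : ℤ) - zeros x

def ojzjF (n k : ℕ) (x : Fin n → Bool) : ℤ × ℤ := (ojzjF1 n k x, ojzjF2 n k x)

def dominates {n : ℕ} (f : (Fin n → Bool) → ℤ × ℤ) (y x : Fin n → Bool) : Prop :=
  (f x).1 ≤ (f y).1 ∧ (f x).2 ≤ (f y).2 ∧ ((f x).1 < (f y).1 ∨ (f x).2 < (f y).2)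

def paretoOptimal {n : ℕ} (f : (Fin n → Bool) → ℤ × ℤ) (x : Fin n → Bool) : Prop :=
  ¬ ∃ y : Fin n → Bool, dominates f y x

lemma ones_le {n : ℕ} (x : Fin n → Bool) : ones x ≤ n := by
  simpa [ones] using Finset.card_filter_le Finset.univ (fun i => x i = true)

lemma ones_add_zeros {n : ℕ} (x : Fin n → Bool) : ones x + zeros x = n := by
  classical
  have h := Finset.card_filter_add_card_filter_not (s := (Finset.univ : Finset (Fin n))) (p := fun i => x i = true)
  have h2 : (Finset.univ.filter fun i => ¬ (x i = true)) = (Finset.univ.filter fun i => x i = false) := by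
    apply Finset.filter_congr; intro i _; simp
  unfold ones zeros
  rw [← h2]
  simpa using h

lemma ones_eq_n_iff {n : ℕ} (x : Fin n → Bool) : ones x = n ↔ x = (fun _ => true) := by
  unfold ones
  rw [funext_iff]
  constructor
  · intro h i
    have h2 : (Finset.univ.filter fun i => x i = true) = Finset.univ := by
      apply Finset.eq_univ_of_card; simpa using h
    have := Finset.mem_filter.mp (h2 ▸ Finset.mem_univ i)
    simpa using this.2
  · intro h; simp [h]

lemma ones_eq_zero_iff {n : ℕ} (x : Fin n → Bool) : ones x = 0 ↔ x = (fun _ => false) := by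
  unfold ones
  rw [funext_iff, Finset.card_eq_zero, Finset.filter_eq_empty_iff]
  simp

lemma exists_ones_eq {n m : ℕ} (h : m ≤ n) : ∃ y : Fin n → Bool, ones y = m := by
  refine ⟨fun i => decide (i.1 < m), ?_⟩
  unfold ones
  simp only [decide_eq_true_eq]
  have : (Finset.univ.filter fun i : Fin n => i.1 < m)
      = (Finset.univ : Finset (Fin m)).map ⟨Fin.castLE h, Fin.castLE_injective h⟩ := by
    ext i
    simp only [Finset.mem_filter, Finset.mem_univ, true_and, Finset.mem_map,
      Function.Embedding.coeFn_mk]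
    constructor
    · intro hi; exact ⟨⟨i.1, hi⟩, rfl⟩
    · rintro ⟨j, -, rfl⟩; exact j.2
  rw [this]; simp

section eval
variable {n k : ℕ} (x : Fin n → Bool)

lemma f1_low (hm : ones x ≤ n - k) : ojzjF1 n k x = (k : ℤ) + ones x := by
  unfold ojzjF1; rw [if_pos (Or.inl hm)]

lemma f1_top (hm : ones x = n) : ojzjF1 n k x = (k : ℤ) + n := by
  unfold ojzjF1; rw [if_pos (Or.inr ((ones_eq_n_iff x).mp hm)), hm]

lemma f1_jump (h1 : n - k < ones x) (h2 : ones x ≠ n) :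
    ojzjF1 n k x = (n : ℤ) - ones x := by
  unfold ojzjF1
  rw [if_neg]
  push_neg
  exact ⟨by omega, fun h => h2 ((ones_eq_n_iff x).mpr h)⟩

lemma f2_high (hkn : k ≤ ones x) : ojzjF2 n k x = (k : ℤ) + (n - ones x) := by
  have hz : zeros x = n - ones x := by have := ones_add_zeros x; omega
  have hle : ones x ≤ n := ones_le x
  unfold ojzjF2
  rw [if_pos (Or.inl (by omega))]
  rw [hz]; push_cast [hle]; ring

lemma f2_bot (hm : ones x = 0) : ojzjF2 n k x = (k : ℤ) + n := by
  have hz : zeros x = n := by have := ones_add_zeros x; omega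
  unfold ojzjF2
  rw [if_pos (Or.inr ((ones_eq_zero_iff x).mp hm)), hz]

lemma f2_jump (hkn : k ≤ n) (h1 : 0 < ones x) (h2 : ones x < k) :
    ojzjF2 n k x = (ones x : ℤ) := by
  have hz : zeros x = n - ones x := by have := ones_add_zeros x; omega
  have hle : ones x ≤ n := ones_le x
  unfold ojzjF2
  rw [if_neg, hz]
  · push_cast [hle]; ring
  push_neg
  constructor
  · omega
  · intro h
    have := (ones_eq_zero_iff x).mpr h
    omega

end eval


lemma ojzj_sum_le (n k : ℕ) (h2 : 2 ≤ k) (hk : 4 * k ≤ n) (y : Fin n → Bool) :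
    ojzjF1 n k y + ojzjF2 n k y ≤ (n : ℤ) + 2 * k := by
  have hle := ones_le y
  by_cases h0 : ones y = 0
  · rw [f1_low y (by omega), f2_bot y h0]; push_cast; omega
  by_cases hn : ones y = n
  · rw [f1_top y hn, f2_high y (by omega)]; push_cast; omega
  by_cases hsm : ones y < k
  · rw [f1_low y (by omega), f2_jump y (by omega) (by omega) hsm]; push_cast; omega
  by_cases hbig : n - k < ones y
  · rw [f1_jump y hbig hn, f2_high y (by omega)]; push_cast; omega
  · rw [f1_low y (by omega), f2_high y (by omega)]; push_cast; omega


theorem ojzj_pareto_set (n k : ℕ) (h2 : 2 ≤ k) (hk : 4 * k ≤ n) (x : Fin n → Bool) :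
    paretoOptimal (ojzjF n k) x ↔
      (k ≤ ones x ∧ ones x ≤ n - k) ∨ ones x = 0 ∨ ones x = n := by
  have hle := ones_le x
  constructor
  · intro hp
    by_contra hcon
    push_neg at hcon
    obtain ⟨hc1, hc2, hc3⟩ := hcon
    apply hp
    by_cases hsmall : ones x < k
    · -- ones x ∈ [1, k-1]; dominated by y with ones y = n - k
      obtain ⟨y, hy⟩ := exists_ones_eq (show n - k ≤ n by omega)
      have hfx1 : ojzjF1 n k x = (k : ℤ) + ones x := f1_low x (by omega)
      have hfx2 : ojzjF2 n k x = (ones x : ℤ) := f2_jump x (by omega) (by omega) hsmall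
      have hfy1 : ojzjF1 n k y = (k : ℤ) + ones y := f1_low y (by omega)
      have hfy2 : ojzjF2 n k y = (k : ℤ) + ((n : ℤ) - ones y) := f2_high y (by omega)
      refine ⟨y, ?_⟩
      unfold dominates ojzjF
      simp only [hfx1, hfx2, hfy1, hfy2, hy]
      refine ⟨?_, ?_, Or.inl ?_⟩ <;> push_cast <;> omega
    · -- ones x ∈ [n-k+1, n-1]; dominated by y with ones y = k
      have hbig : n - k < ones x := by omega
      obtain ⟨y, hy⟩ := exists_ones_eq (show k ≤ n by omega)
      have hfx1 : ojzjF1 n k x = (n : ℤ) - ones x := f1_jump x hbig hc3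
      have hfx2 : ojzjF2 n k x = (k : ℤ) + ((n : ℤ) - ones x) := f2_high x (by omega)
      have hfy1 : ojzjF1 n k y = (k : ℤ) + ones y := f1_low y (by omega)
      have hfy2 : ojzjF2 n k y = (k : ℤ) + ((n : ℤ) - ones y) := f2_high y (by omega)
      refine ⟨y, ?_⟩
      unfold dominates ojzjF
      simp only [hfx1, hfx2, hfy1, hfy2, hy]
      refine ⟨?_, ?_, Or.inl ?_⟩ <;> push_cast <;> omega
  · rintro hset ⟨y, hy⟩
    have hsy := ojzj_sum_le n k h2 hk y
    have hsx : ojzjF1 n k x + ojzjF2 n k x = (n : ℤ) + 2 * k := by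
      rcases hset with ⟨ha, hb⟩ | h0 | hn
      · rw [f1_low x hb, f2_high x ha]; push_cast; omega
      · rw [f1_low x (by omega), f2_bot x h0]; push_cast; omega
      · rw [f1_top x hn, f2_high x (by omega)]; push_cast; omega
    unfold dominates ojzjF at hy
    obtain ⟨ha, hb, hc⟩ := hy
    simp only at ha hb hc
    rcases hc with h | h <;> linarith
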